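/- Let V be a finite-dimensional complex normed vector space with Borel σ-algebra and additive Haar measure μ, and let Ω ⊆ V be a bounded measurable set invariant under multiplication by i, i.e. i•Ω = Ω. Then for all complex-linear functionals θ, φ : V → ℂ: ∫_Ω θ(η) · conj(φ(η)) dμ(η) = 2 · ∫_Ω Re(θ(η)) · Re(φ(η)) dμ(η) − 2i · ∫_Ω Re(θ(i·η)) · Re(φ(η)) dμ(η). -/

import Mathlib

open MeasureTheory
open scoped Pointwise

/-- For a bounded measurable set `Ω` invariant under multiplication by
`i`, and complex-linear functionals `θ, φ`:
`∫_Ω θ conj(φ) dμ = 2 ∫_Ω Re(θ) Re(φ) dμ − 2i ∫_Ω Re(θ(i·η)) Re(φ(η)) dμ`. -/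
theorem integral_mul_conj_eq_real_parts
    {V : Type*} [NormedAddCommGroup V] [NormedSpace ℂ V] [FiniteDimensional ℂ V]
    [MeasurableSpace V] [BorelSpace V]
    (μ : Measure V) [μ.IsAddHaarMeasure]
    (Ω : Set V) (hΩmeas : MeasurableSet Ω) (hΩbdd : Bornology.IsBounded Ω)
    (hΩinv : (Complex.I • Ω : Set V) = Ω)
    (θ φ : V →ₗ[ℂ] ℂ) :
    ∫ η in Ω, θ η * (starRingEnd ℂ) (φ η) ∂μ =
      2 * ((∫ η in Ω, (θ η).re * (φ η).re ∂μ : ℝ) : ℂ) -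
        2 * Complex.I * ((∫ η in Ω, (θ (Complex.I • η)).re * (φ η).re ∂μ : ℝ) : ℂ) := by
  classical
  -- the multiplication-by-I map as a real-linear equivalence
  set e : V ≃ₗ[ℝ] V :=
    (LinearEquiv.smulOfNeZero ℂ V Complex.I Complex.I_ne_zero).restrictScalars ℝ with he
  have he_apply : ∀ v : V, e v = Complex.I • v := fun v => rfl
  set f : V →ₗ[ℝ] V := e.toLinearMap with hf
  -- f ∘ f = -id, so det f ^ 2 = (-1) ^ (finrank ℝ V) = 1
  have hff : f.comp f = (-1 : ℝ) • LinearMap.id := by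
    ext v
    simp [hf, he_apply, smul_smul, Complex.I_mul_I, neg_one_smul]
  have hdim : Module.finrank ℝ V = 2 * Module.finrank ℂ V := by
    rw [← Module.finrank_mul_finrank ℝ ℂ V, Complex.finrank_real_complex]
  have hsq : LinearMap.det f * LinearMap.det f = 1 := by
    rw [← LinearMap.det_comp, hff, LinearMap.det_smul, LinearMap.det_id, mul_one, hdim,
      pow_mul]
    norm_num
  have habs : |LinearMap.det f| = 1 := by
    have h0 : (LinearMap.det f - 1) * (LinearMap.det f + 1) = 0 := by ring_nf; nlinarith [hsq]
    rcases mul_eq_zero.mp h0 with h | h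
    · rw [abs_of_pos (by linarith)]; linarith
    · rw [abs_of_neg (by linarith)]; linarith
  have hdet : LinearMap.det f ≠ 0 := fun h => by simp [h] at habs
  -- measure preservation
  have hmap : Measure.map f μ = μ := by
    rw [Measure.map_linearMap_addHaar_eq_smul_addHaar μ hdet, abs_inv, habs]
    simp
  have hmeasemb : MeasurableEmbedding (f : V → V) := by
    exact (e.toContinuousLinearEquiv.toHomeomorph.measurableEmbedding)
  have hmp : MeasurePreserving (f : V → V) μ μ :=
    ⟨f.continuous_of_finiteDimensional.measurable, hmap⟩
  -- the preimage of Ω under multiplication by I is Ω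
  have hpre : (f : V → V) ⁻¹' Ω = Ω := by
    ext v
    have : f v = Complex.I • v := rfl
    simp only [Set.mem_preimage, this]
    constructor
    · intro hv
      have h1 : Complex.I • v ∈ (Complex.I • Ω : Set V) := hΩinv.symm ▸ hv
      rw [Set.mem_smul_set_iff_inv_smul_mem₀ Complex.I_ne_zero] at h1
      simpa [smul_smul, inv_mul_cancel₀ Complex.I_ne_zero] using h1
    · intro hv
      have : Complex.I • v ∈ (Complex.I • Ω : Set V) :=
        Set.smul_mem_smul_set hv
      rwa [hΩinv] at this
  -- substitution lemma
  have hsub : ∀ g : V → ℝ, (∫ η in Ω, g (Complex.I • η) ∂μ) = ∫ η in Ω, g η ∂μ := by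
    intro g
    have := hmp.setIntegral_preimage_emb hmeasemb g Ω
    rw [hpre] at this
    simpa [hf, he_apply] using this
  -- integrability
  have hcontθ : Continuous fun v : V => θ v := θ.continuous_of_finiteDimensional
  have hcontφ : Continuous fun v : V => φ v := φ.continuous_of_finiteDimensional
  have key : ∀ g : V → ℝ, Continuous g → IntegrableOn g Ω μ := fun g hg =>
    (hg.continuousOn.integrableOn_compact hΩbdd.isCompact_closure).mono_set subset_closure
  have keyC : ∀ g : V → ℂ, Continuous g → IntegrableOn g Ω μ := fun g hg =>
    (hg.continuousOn.integrableOn_compact hΩbdd.isCompact_closure).mono_set subset_closure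
  have hRR : IntegrableOn (fun η => (θ η).re * (φ η).re) Ω μ :=
    key _ ((Complex.continuous_re.comp hcontθ).mul (Complex.continuous_re.comp hcontφ))
  have hII : IntegrableOn (fun η => (θ η).im * (φ η).im) Ω μ :=
    key _ ((Complex.continuous_im.comp hcontθ).mul (Complex.continuous_im.comp hcontφ))
  have hIR : IntegrableOn (fun η => (θ η).im * (φ η).re) Ω μ :=
    key _ ((Complex.continuous_im.comp hcontθ).mul (Complex.continuous_re.comp hcontφ))
  have hRI : IntegrableOn (fun η => (θ η).re * (φ η).im) Ω μ :=
    key _ ((Complex.continuous_re.comp hcontθ).mul (Complex.continuous_im.comp hcontφ))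
  -- abbreviations
  set A : ℝ := ∫ η in Ω, (θ η).re * (φ η).re ∂μ with hA
  set B : ℝ := ∫ η in Ω, (θ η).im * (φ η).im ∂μ with hB
  set C : ℝ := ∫ η in Ω, (θ η).im * (φ η).re ∂μ with hC
  set D : ℝ := ∫ η in Ω, (θ η).re * (φ η).im ∂μ with hD
  -- values of θ, φ at I • η
  have hθI : ∀ η : V, θ (Complex.I • η) = Complex.I * θ η := by
    intro η; rw [θ.map_smul, smul_eq_mul]
  have hφI : ∀ η : V, φ (Complex.I • η) = Complex.I * φ η := by
    intro η; rw [φ.map_smul, smul_eq_mul]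
  -- B = A
  have hBA : B = A := by
    have := hsub (fun v => (θ v).re * (φ v).re)
    rw [hA, ← this, hB]
    congr 1
    ext η
    simp [hθI, hφI, Complex.mul_re]
  -- D = -C
  have hDC : D = -C := by
    have := hsub (fun v => (θ v).re * (φ v).im)
    rw [hD, ← this, hC, ← integral_neg]
    congr 1
    ext η
    simp [hθI, hφI, Complex.mul_re, Complex.mul_im]
  -- the RHS integral equals -C
  have hE : (∫ η in Ω, (θ (Complex.I • η)).re * (φ η).re ∂μ) = -C := by
    rw [hC, ← integral_neg]
    congr 1
    ext η
    simp [hθI, Complex.mul_re]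
  -- pointwise decomposition of z * conj w
  have hpt : ∀ z w : ℂ, z * (starRingEnd ℂ) w =
      ((z.re * w.re + z.im * w.im : ℝ) : ℂ) +
        ((z.im * w.re - z.re * w.im : ℝ) : ℂ) * Complex.I := by
    intro z w
    apply Complex.ext <;> simp [Complex.mul_re, Complex.mul_im] <;> ring
  have hint1 : IntegrableOn
      (fun η => (((θ η).re * (φ η).re + (θ η).im * (φ η).im : ℝ) : ℂ)) Ω μ :=
    keyC _ (Complex.continuous_ofReal.comp
      (((Complex.continuous_re.comp hcontθ).mul (Complex.continuous_re.comp hcontφ)).add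
        ((Complex.continuous_im.comp hcontθ).mul (Complex.continuous_im.comp hcontφ))))
  have hint2 : IntegrableOn
      (fun η => (((θ η).im * (φ η).re - (θ η).re * (φ η).im : ℝ) : ℂ) * Complex.I) Ω μ := by
    exact Integrable.mul_const (keyC _ (Complex.continuous_ofReal.comp
      (((Complex.continuous_im.comp hcontθ).mul (Complex.continuous_re.comp hcontφ)).sub
        ((Complex.continuous_re.comp hcontθ).mul (Complex.continuous_im.comp hcontφ))))) Complex.I
  calc ∫ η in Ω, θ η * (starRingEnd ℂ) (φ η) ∂μ
      = ∫ η in Ω, ((((θ η).re * (φ η).re + (θ η).im * (φ η).im : ℝ) : ℂ) +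
          (((θ η).im * (φ η).re - (θ η).re * (φ η).im : ℝ) : ℂ) * Complex.I) ∂μ := by
        simp_rw [hpt]
    _ = ((A + B : ℝ) : ℂ) + ((C - D : ℝ) : ℂ) * Complex.I := by
        have h1 : (∫ a in Ω, (((θ a).re * (φ a).re + (θ a).im * (φ a).im : ℝ) : ℂ) ∂μ) =
            ((∫ a in Ω, ((θ a).re * (φ a).re + (θ a).im * (φ a).im) ∂μ : ℝ) : ℂ) :=
          integral_ofReal
        have h2 : (∫ a in Ω, (((θ a).im * (φ a).re - (θ a).re * (φ a).im : ℝ) : ℂ) ∂μ) =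
            ((∫ a in Ω, ((θ a).im * (φ a).re - (θ a).re * (φ a).im) ∂μ : ℝ) : ℂ) :=
          integral_ofReal
        rw [integral_add hint1 hint2, integral_mul_const, h1, h2,
          integral_add hRR hII, integral_sub hIR hRI, ← hA, ← hB, ← hC, ← hD]
    _ = 2 * (A : ℂ) - 2 * Complex.I * ((∫ η in Ω, (θ (Complex.I • η)).re * (φ η).re ∂μ : ℝ) : ℂ) := by
        rw [hE, hBA, hDC]
        push_cast
        ring
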